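/- For n a power of 20, the lexicographic power S_10^k of the standard example S_10 (where n = 20^k) has the property that every induced subposet of order dimension at most 2 has size at most n^{log_20 12}, and log_20 12 < 0.8295. -/

import Mathlib

/-- A poset has order dimension at most `d`: there are `d` linear extensions
whose intersection is the order relation. -/
def dimLE (α : Type*) [PartialOrder α] (d : ℕ) : Prop :=
  ∃ L : Fin d → LinearOrder α,
    (∀ i, ∀ x y : α, x ≤ y → (L i).le x y) ∧
    (∀ x y : α, (∀ i, (L i).le x y) → x ≤ y)

/-- The standard example `S_m`: `inl i = a_i`, `inr j = b_j`, with `a_i < b_j` iff `i ≠ j`,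
and no other strict relations. -/
def StdEx (m : ℕ) := Fin m ⊕ Fin m

instance (m : ℕ) : PartialOrder (StdEx m) where
  le x y := x = y ∨ ∃ i j, x = Sum.inl i ∧ y = Sum.inr j ∧ i ≠ j
  le_refl x := Or.inl rfl
  le_trans := by
    rintro x y z (rfl | ⟨i, j, rfl, rfl, hij⟩) (rfl | ⟨i', j', h1, rfl, hij'⟩)
    · exact Or.inl rfl
    · exact Or.inr ⟨i', j', h1, rfl, hij'⟩
    · exact Or.inr ⟨i, j, rfl, rfl, hij⟩
    · exact absurd h1 (by simp)
  le_antisymm := by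
    rintro x y (rfl | ⟨i, j, rfl, rfl, hij⟩) (h | ⟨i', j', h1, h2, hij'⟩)
    · rfl
    · rfl
    · exact absurd h (by simp)
    · exact absurd h1 (by simp)

instance (m : ℕ) : Fintype (StdEx m) := instFintypeSum _ _

/-- The lexicographic `k`-th power of a poset `P`: `k`-tuples ordered lexicographically. -/
abbrev LexPow (P : Type*) (k : ℕ) := Lex (Fin k → P)

instance (m : ℕ) : DecidableEq (StdEx m) :=
  inferInstanceAs (DecidableEq (Fin m ⊕ Fin m))

lemma stdEx_inl_inj {m : ℕ} {i j : Fin m} : (Sum.inl i : StdEx m) = Sum.inl j ↔ i = j :=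
  ⟨fun h => Sum.inl_injective h, fun h => h ▸ rfl⟩

lemma stdEx_inr_inj {m : ℕ} {i j : Fin m} : (Sum.inr i : StdEx m) = Sum.inr j ↔ i = j :=
  ⟨fun h => Sum.inr_injective h, fun h => h ▸ rfl⟩

lemma stdEx_inl_ne_inr {m : ℕ} {i j : Fin m} : (Sum.inl i : StdEx m) ≠ Sum.inr j :=
  fun h => by cases h

lemma stdEx_inr_ne_inl {m : ℕ} {i j : Fin m} : (Sum.inr i : StdEx m) ≠ Sum.inl j :=
  fun h => by cases h

lemma stdEx_le_iff' {m : ℕ} (x y : StdEx m) :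
    x ≤ y ↔ (x = y ∨ ∃ i j, x = Sum.inl i ∧ y = Sum.inr j ∧ i ≠ j) := Iff.rfl

lemma stdEx_inl_le_inl {m : ℕ} {i j : Fin m} :
    @LE.le (StdEx m) Preorder.toLE (Sum.inl i) (Sum.inl j) ↔ i = j := by
  refine (stdEx_le_iff' _ _).trans ?_
  constructor
  · rintro (h | ⟨a, b, ha, hb, hab⟩)
    · exact Sum.inl_injective h
    · exact absurd hb (fun h => by cases h)
  · rintro rfl; exact Or.inl rfl

lemma stdEx_inr_le_inr {m : ℕ} {i j : Fin m} :
    @LE.le (StdEx m) Preorder.toLE (Sum.inr i) (Sum.inr j) ↔ i = j := by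
  refine (stdEx_le_iff' _ _).trans ?_
  constructor
  · rintro (h | ⟨a, b, ha, hb, hab⟩)
    · exact Sum.inr_injective h
    · exact absurd ha (fun h => by cases h)
  · rintro rfl; exact Or.inl rfl

lemma stdEx_inl_le_inr {m : ℕ} {i j : Fin m} :
    @LE.le (StdEx m) Preorder.toLE (Sum.inl i) (Sum.inr j) ↔ i ≠ j := by
  refine (stdEx_le_iff' _ _).trans ?_
  constructor
  · rintro (h | ⟨a, b, ha, hb, hab⟩)
    · exact absurd h (fun h => by cases h)
    · cases Sum.inl_injective ha; cases Sum.inr_injective hb; exact hab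
  · intro h; exact Or.inr ⟨i, j, rfl, rfl, h⟩

lemma stdEx_not_inr_le_inl {m : ℕ} {i j : Fin m} :
    ¬ @LE.le (StdEx m) Preorder.toLE (Sum.inr i) (Sum.inl j) := by
  refine mt (stdEx_le_iff' _ _).1 ?_
  rintro (h | ⟨a, b, ha, hb, hab⟩)
  · cases h
  · cases ha

/- ### Auxiliary lemmas -/

lemma dimLE_of_embed {α β : Type*} [PartialOrder α] [PartialOrder β] {d : ℕ}
    (f : α → β) (hinj : Function.Injective f)
    (hiff : ∀ x y, x ≤ y ↔ f x ≤ f y) (h : dimLE β d) : dimLE α d := by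
  obtain ⟨L, h1, h2⟩ := h
  refine ⟨fun i => @LinearOrder.lift' α β (L i) f hinj, ?_, ?_⟩
  · intro i x y hxy
    exact h1 i (f x) (f y) ((hiff x y).1 hxy)
  · intro x y hxy
    exact (hiff x y).2 (h2 (f x) (f y) hxy)

lemma stdEx_le_iff {m : ℕ} (x y : StdEx m) :
    x ≤ y ↔ (x = y ∨ ∃ i j, x = Sum.inl i ∧ y = Sum.inr j ∧ i ≠ j) := Iff.rfl

section LexLemmas
variable {P : Type*} [PartialOrder P] {k : ℕ}

lemma lex_lt_iff (x y : Lex (Fin k → P)) :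
    x < y ↔ ∃ i, (∀ j, j < i → ofLex x j = ofLex y j) ∧ ofLex x i < ofLex y i := Iff.rfl

lemma lex_le_iff (x y : Lex (Fin k → P)) : x ≤ y ↔ x < y ∨ x = y := le_iff_lt_or_eq

lemma head_lt (x y : Lex (Fin (k+1) → P)) (h : ofLex x 0 < ofLex y 0) : x < y :=
  ⟨0, fun j hj => absurd hj (Fin.not_lt_zero j), h⟩

lemma head_le_of_le (x y : Lex (Fin (k+1) → P)) (h : x ≤ y) :
    ofLex x 0 = ofLex y 0 ∨ ofLex x 0 < ofLex y 0 := by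
  rcases (lex_le_iff x y).1 h with h' | rfl
  · obtain ⟨i, hj, hi⟩ := h'
    rcases eq_or_ne i 0 with rfl | hne
    · exact Or.inr hi
    · exact Or.inl (hj 0 (Fin.pos_of_ne_zero hne))
  · exact Or.inl rfl

lemma cons_le_cons_iff (p : P) (y y' : Lex (Fin k → P)) :
    (toLex (Fin.cons p (ofLex y)) : Lex (Fin (k+1) → P)) ≤ toLex (Fin.cons p (ofLex y')) ↔ y ≤ y' := by
  rw [lex_le_iff, lex_le_iff]
  constructor
  · rintro (⟨i, hj, hi⟩ | h)
    · refine i.cases (fun hj hi => absurd hi (lt_irrefl p)) (fun i₀ hj hi => ?_) hj hi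
      refine Or.inl ⟨i₀, fun j hj' => ?_, ?_⟩
      · have := hj j.succ (Fin.succ_lt_succ_iff.2 hj')
        simpa using this
      · simpa using hi
    · right
      have h' : (Fin.cons p (ofLex y) : Fin (k+1) → P) = Fin.cons p (ofLex y') := by
        simpa [toLex_inj] using h
      have h'' : ofLex y = ofLex y' := by
        funext j
        have := congrFun h' j.succ
        simpa using this
      exact ofLex.injective h''
  · rintro (⟨i₀, hj, hi⟩ | rfl)
    · refine Or.inl ⟨i₀.succ, fun j => j.cases (fun _ => rfl) (fun j' hj' => ?_), by simpa using hi⟩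
      have hj'' : (j' : Fin k) < i₀ := by
        simpa [Fin.succ_lt_succ_iff] using hj'
      simpa using hj j' hj''
    · exact Or.inr rfl

end LexLemmas

/- ### S₃ has dimension at least 3 -/

lemma not_dimLE_stdEx3 : ¬ dimLE (StdEx 3) 2 := by
  rintro ⟨L, h1, h2⟩
  have key : ∀ i : Fin 3, ∃ t : Fin 2,
      ¬ (L t).le (Sum.inl i : StdEx 3) (Sum.inr i) := by
    intro i
    by_contra hcon
    push_neg at hcon
    have hle := h2 _ _ hcon
    rcases (stdEx_le_iff _ _).1 hle with h | ⟨a, b, ha, hb, hab⟩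
    · exact absurd h (by simp)
    · cases Sum.inl_injective ha; cases Sum.inr_injective hb; exact hab rfl
  choose g hg using key
  obtain ⟨i, j, hij, hgij⟩ :=
    Fintype.exists_ne_map_eq_of_card_lt g (by simp)
  have hbi : (L (g i)).le (Sum.inr i : StdEx 3) (Sum.inl i) :=
    ((L (g i)).le_total _ _).resolve_left (hg i)
  have hbj : (L (g i)).le (Sum.inr j : StdEx 3) (Sum.inl j) := by
    rw [hgij]; exact ((L (g j)).le_total _ _).resolve_left (hg j)
  have hij' : (L (g i)).le (Sum.inl i : StdEx 3) (Sum.inr j) :=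
    h1 (g i) _ _ ((stdEx_le_iff _ _).2 (Or.inr ⟨i, j, rfl, rfl, hij⟩))
  have hji' : (L (g i)).le (Sum.inl j : StdEx 3) (Sum.inr i) :=
    h1 (g i) _ _ ((stdEx_le_iff _ _).2 (Or.inr ⟨j, i, rfl, rfl, Ne.symm hij⟩))
  exact hg i ((L (g i)).le_trans _ _ _ hij' ((L (g i)).le_trans _ _ _ hbj hji'))

/- ### Any dim ≤ 2 subposet of S₁₀ has at most 12 elements -/

lemma card_le_twelve (S : Finset (StdEx 10)) (h : dimLE {x // x ∈ S} 2) :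
    S.card ≤ 12 := by
  by_contra hc
  push_neg at hc
  classical
  set A := Finset.univ.filter (fun i : Fin 10 => (Sum.inl i : StdEx 10) ∈ S) with hA
  set B := Finset.univ.filter (fun i : Fin 10 => (Sum.inr i : StdEx 10) ∈ S) with hB
  have hS : S = (A.image Sum.inl ∪ B.image Sum.inr : Finset (StdEx 10)) := by
    ext x
    cases x with
    | inl v =>
      erw [Finset.mem_union, Finset.mem_image, Finset.mem_image]
      simp only [hA, hB, Finset.mem_union, Finset.mem_image, Finset.mem_filter,
        Finset.mem_univ, true_and]
      constructor
      · intro h; exact Or.inl ⟨v, h, rfl⟩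
      · rintro (⟨a, ha, hev⟩ | ⟨a, ha, hev⟩)
        · cases hev; exact ha
        · cases hev
    | inr v =>
      erw [Finset.mem_union, Finset.mem_image, Finset.mem_image]
      simp only [hA, hB, Finset.mem_union, Finset.mem_image, Finset.mem_filter,
        Finset.mem_univ, true_and]
      constructor
      · intro h; exact Or.inr ⟨v, h, rfl⟩
      · rintro (⟨a, ha, hev⟩ | ⟨a, ha, hev⟩)
        · cases hev
        · cases hev; exact ha
  have hcard : S.card = A.card + B.card := by
    rw [hS, Finset.card_union_of_disjoint (by
        rw [Finset.disjoint_left]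
        rintro a ha hb
        obtain ⟨u, -, hu⟩ := Finset.mem_image.1 ha
        obtain ⟨v, -, hv⟩ := Finset.mem_image.1 hb
        rw [← hv] at hu
        cases hu),
      ]
    erw [Finset.card_image_of_injective _ Sum.inl_injective,
      Finset.card_image_of_injective _ Sum.inr_injective]
  have hAB : 3 ≤ (A ∩ B).card := by
    have h1 := Finset.card_inter_add_card_union A B
    have h2 : (A ∪ B).card ≤ 10 := le_trans (Finset.card_le_univ _) (by simp)
    omega
  obtain ⟨C, hCsub, hC3⟩ := Finset.exists_subset_card_eq hAB
  set e : Fin 3 → Fin 10 := fun i => ((C.equivFinOfCardEq hC3).symm i : Fin 10) with he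
  have einj : Function.Injective e := fun i j hij => by
    have := (C.equivFinOfCardEq hC3).symm.injective (Subtype.ext hij)
    exact this
  have heC : ∀ i, e i ∈ C := fun i => ((C.equivFinOfCardEq hC3).symm i).2
  have hea : ∀ i, (Sum.inl (e i) : StdEx 10) ∈ S := fun i => by
    have := hCsub (heC i)
    rw [Finset.mem_inter, hA] at this
    simpa using this.1
  have heb : ∀ i, (Sum.inr (e i) : StdEx 10) ∈ S := fun i => by
    have := hCsub (heC i)
    rw [Finset.mem_inter, hB] at this
    simpa using this.2
  set f : StdEx 3 → {x // x ∈ S} := fun x =>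
    match x with
    | Sum.inl i => ⟨Sum.inl (e i), hea i⟩
    | Sum.inr i => ⟨Sum.inr (e i), heb i⟩ with hf
  have finj : Function.Injective f := by
    rintro (i | i) (j | j) hxy <;> replace hxy := congrArg Subtype.val hxy
    · rw [einj (Sum.inl_injective hxy)]
    · exact absurd hxy (fun h => Sum.inl_ne_inr h)
    · exact absurd hxy (fun h => Sum.inr_ne_inl h)
    · rw [einj (Sum.inr_injective hxy)]
  have hiff : ∀ x y : StdEx 3, x ≤ y ↔ f x ≤ f y := by
    rintro (i | i) (j | j)
    · rw [← Subtype.coe_le_coe]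
      show @LE.le (StdEx 3) Preorder.toLE (Sum.inl i) (Sum.inl j) ↔
        @LE.le (StdEx 10) Preorder.toLE (Sum.inl (e i)) (Sum.inl (e j))
      rw [stdEx_inl_le_inl, stdEx_inl_le_inl, einj.eq_iff]
    · rw [← Subtype.coe_le_coe]
      show @LE.le (StdEx 3) Preorder.toLE (Sum.inl i) (Sum.inr j) ↔
        @LE.le (StdEx 10) Preorder.toLE (Sum.inl (e i)) (Sum.inr (e j))
      rw [stdEx_inl_le_inr, stdEx_inl_le_inr]
      exact einj.ne_iff.symm
    · rw [← Subtype.coe_le_coe]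
      show @LE.le (StdEx 3) Preorder.toLE (Sum.inr i) (Sum.inl j) ↔
        @LE.le (StdEx 10) Preorder.toLE (Sum.inr (e i)) (Sum.inl (e j))
      exact iff_of_false stdEx_not_inr_le_inl stdEx_not_inr_le_inl
    · rw [← Subtype.coe_le_coe]
      show @LE.le (StdEx 3) Preorder.toLE (Sum.inr i) (Sum.inr j) ↔
        @LE.le (StdEx 10) Preorder.toLE (Sum.inr (e i)) (Sum.inr (e j))
      rw [stdEx_inr_le_inr, stdEx_inr_le_inr, einj.eq_iff]
  exact not_dimLE_stdEx3 (dimLE_of_embed f finj hiff h)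

/- ### Main counting lemma -/

lemma key_card : ∀ (k : ℕ) (S : Finset (LexPow (StdEx 10) k)),
    dimLE {x // x ∈ S} 2 → S.card ≤ 12 ^ k := by
  intro k
  induction k with
  | zero =>
    intro S _
    have : S.card ≤ 1 := Finset.card_le_one.2 (fun x _ y _ => by
      apply ofLex.injective; funext i; exact i.elim0)
    simpa using this
  | succ k ih =>
    intro S hS
    classical
    set T : Finset (StdEx 10) := S.image (fun x : LexPow (StdEx 10) (k+1) => ofLex x 0) with hT
    have hcard : S.card = ∑ p ∈ T, (S.filter (fun x : LexPow (StdEx 10) (k+1) => ofLex x 0 = p)).card :=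
      Finset.card_eq_sum_card_fiberwise (fun x hx => Finset.mem_image_of_mem _ hx)
    -- each fiber has at most 12^k elements
    have hfib : ∀ p ∈ T, (S.filter (fun x : LexPow (StdEx 10) (k+1) => ofLex x 0 = p)).card ≤ 12 ^ k := by
      intro p hp
      set F := S.filter (fun x : LexPow (StdEx 10) (k+1) => ofLex x 0 = p) with hF
      set tl : LexPow (StdEx 10) (k+1) → LexPow (StdEx 10) k :=
        fun x => toLex (fun i => ofLex x i.succ) with htl
      set Tp : Finset (LexPow (StdEx 10) k) := F.image tl with hTp
      have hinj : Set.InjOn tl F := by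
        intro x hx y hy hxy
        apply ofLex.injective
        funext i
        induction i using Fin.cases with
        | zero => rw [(Finset.mem_filter.1 hx).2, (Finset.mem_filter.1 hy).2]
        | succ i0 => exact congrFun (congrArg ofLex hxy) i0
      have hc : F.card = Tp.card := (Finset.card_image_of_injOn hinj).symm
      rw [hc]
      -- build embedding of Tp into S
      have hmem : ∀ y ∈ Tp, (toLex (Fin.cons p (ofLex y)) : LexPow (StdEx 10) (k+1)) ∈ S := by
        intro y hy
        obtain ⟨x, hx, rfl⟩ := Finset.mem_image.1 hy
        have hx' := Finset.mem_filter.1 hx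
        have : (Fin.cons p (ofLex (tl x)) : Fin (k+1) → StdEx 10) = ofLex x := by
          funext i
          induction i using Fin.cases with
          | zero => simp [hx'.2]
          | succ i0 => simp [htl]
        rw [this]
        exact hx'.1
      set G : {y // y ∈ Tp} → {x // x ∈ S} :=
        fun y => ⟨toLex (Fin.cons p (ofLex y.1)), hmem y.1 y.2⟩ with hG
      have Ginj : Function.Injective G := by
        intro y y' hyy
        simp only [hG, Subtype.mk.injEq] at hyy
        have h' : (Fin.cons p (ofLex y.1) : Fin (k+1) → StdEx 10) = Fin.cons p (ofLex y'.1) := by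
          simpa [toLex_inj] using hyy
        apply Subtype.ext
        apply ofLex.injective
        funext j
        have := congrFun h' j.succ
        simpa using this
      have Giff : ∀ y y' : {y // y ∈ Tp}, y ≤ y' ↔ G y ≤ G y' := by
        intro y y'
        rw [Subtype.coe_le_coe.symm, Subtype.coe_le_coe.symm]
        exact (cons_le_cons_iff p y.1 y'.1).symm
      exact ih Tp (dimLE_of_embed G Ginj Giff hS)
    -- the set of first coordinates has at most 12 elements
    have hTcard : T.card ≤ 12 := by
      have hrep : ∀ p : {p // p ∈ T}, ∃ x : LexPow (StdEx 10) (k+1), x ∈ S ∧ ofLex x 0 = p.1 := by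
        intro p
        obtain ⟨x, hx, hx0⟩ := Finset.mem_image.1 p.2
        exact ⟨x, hx, hx0⟩
      choose rep hrepS hrep0 using hrep
      set R : {p // p ∈ T} → {x // x ∈ S} := fun p => ⟨rep p, hrepS p⟩ with hR
      have Rinj : Function.Injective R := by
        intro p q hpq
        simp only [hR, Subtype.mk.injEq] at hpq
        apply Subtype.ext
        rw [← hrep0 p, ← hrep0 q, hpq]
      have Riff : ∀ p q : {p // p ∈ T}, p ≤ q ↔ R p ≤ R q := by
        intro p q
        constructor
        · intro h
          rcases eq_or_ne p q with rfl | hne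
          · exact le_refl _
          · have hne' : p.1 ≠ q.1 := fun h' => hne (Subtype.ext h')
            have hlt : p.1 < q.1 := lt_of_le_of_ne h hne'
            have : rep p < rep q := head_lt _ _ (by rw [hrep0 p, hrep0 q]; exact hlt)
            exact le_of_lt (Subtype.mk_lt_mk.2 this)
        · intro h
          rcases eq_or_ne p q with rfl | hne
          · exact le_refl _
          · have hne' : p.1 ≠ q.1 := fun h' => hne (Subtype.ext h')
            have h' : rep p ≤ rep q := Subtype.mk_le_mk.1 h
            rcases head_le_of_le _ _ h' with heq | hlt
            · rw [hrep0 p, hrep0 q] at heq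
              exact absurd heq hne'
            · rw [hrep0 p, hrep0 q] at hlt
              exact le_of_lt hlt
      exact card_le_twelve T (dimLE_of_embed R Rinj Riff hS)
    calc S.card = ∑ p ∈ T, (S.filter (fun x : LexPow (StdEx 10) (k+1) => ofLex x 0 = p)).card := hcard
      _ ≤ ∑ _p ∈ T, 12 ^ k := Finset.sum_le_sum hfib
      _ = T.card * 12 ^ k := by rw [Finset.sum_const, smul_eq_mul]
      _ ≤ 12 * 12 ^ k := Nat.mul_le_mul_right _ hTcard
      _ = 12 ^ (k + 1) := by ring

/-- For `n = 20^k`, every induced subposet of `S_10^k` of order dimension at most 2 has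
size at most `n ^ (log_20 12)`, and `log_20 12 < 0.8295`. -/
theorem lexPow_stdEx_ten (k : ℕ) :
    (∀ S : Finset (LexPow (StdEx 10) k), dimLE {x // x ∈ S} 2 →
      (S.card : ℝ) ≤ ((20 ^ k : ℕ) : ℝ) ^ Real.logb 20 12) ∧
    Real.logb 20 12 < 0.8295 := by
  constructor
  · intro S hS
    have h1 := key_card k S hS
    have h2 : ((20 ^ k : ℕ) : ℝ) ^ Real.logb 20 12 = (12 : ℝ) ^ k := by
      push_cast
      rw [← Real.rpow_natCast (20 : ℝ) k, ← Real.rpow_mul (by norm_num), mul_comm,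
        Real.rpow_mul (by norm_num), Real.rpow_logb (by norm_num) (by norm_num) (by norm_num),
        Real.rpow_natCast]
    rw [h2]
    exact_mod_cast h1
  · have h : (12 : ℝ) ^ (10000 : ℕ) < 20 ^ (8295 : ℕ) := by
      exact_mod_cast (by set_option maxRecDepth 100000 in decide : (12 : ℕ) ^ 10000 < 20 ^ 8295)
    have hl := Real.log_lt_log (by positivity) h
    rw [Real.log_pow, Real.log_pow] at hl
    have h20 : (0 : ℝ) < Real.log 20 := Real.log_pos (by norm_num)
    rw [Real.logb, div_lt_iff₀ h20]
    push_cast at hl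
    nlinarith [hl]
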